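/- Let D be a coherent and exchangeable set of gambles on X^N with count representation D_c := Hy^N(D). Let 1 ≤ ň < N, n̂ := N − ň, and m̌ ∈ N^ň_X. For a gamble f on X^n̂ let I_{E_m̌}f denote the gamble on X^N = X^ň × X^n̂ mapping (z,y) to f(y) if T^ň(z) = m̌ and to 0 otherwise, set D⌋m̌ := {f ∈ G(X^n̂) : I_{E_m̌}f ∈ D}, and let D_c⌋m̌ := Hy^n̂(D⌋m̌) be its count representation. Define the likelihood function L_m̌ : N^n̂_X → ℝ by L_m̌(m̂) := |[m̌]|·|[m̂]| / |[m̌+m̂]|, and the linear map +_m̌ : G(N^n̂_X) → G(N^N_X) by (+_m̌ g)(M) := g(M − m̌) if M ≥ m̌ componentwise and (+_m̌ g)(M) := 0 otherwise. Then D_c⌋m̌ = {g ∈ G(N^n̂_X) : +_m̌(L_m̌·g) ∈ D_c}, where L_m̌·g denotes the pointwise product. -/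

import Mathlib

variable {X : Type*} [Fintype X] [DecidableEq X] [Nonempty X]

/-- `ex^N(f)`: the uniform average of all permuted versions `π^t f` of `f`,
where `(π^t f)(x) = f(x ∘ π)`. -/
noncomputable def exg {X : Type*} (N : ℕ) (f : (Fin N → X) → ℝ) : (Fin N → X) → ℝ :=
  fun x => (∑ π : Equiv.Perm (Fin N), f (x ∘ π)) / (N.factorial : ℝ)

/-- `W_{A_N}`: the linear span of the gambles `f - π^t f`, which is the kernel of
the projection operator `ex^N`. -/
def WA (X : Type*) (N : ℕ) : Set ((Fin N → X) → ℝ) := {f | exg N f = 0}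

/-- A coherent set of desirable gambles on a set of possibilities `Y`. -/
def Coherent {Y : Type*} (D : Set (Y → ℝ)) : Prop :=
  (0 : Y → ℝ) ∉ D ∧ (∀ f : Y → ℝ, 0 ≤ f → f ≠ 0 → f ∈ D) ∧
  (∀ f ∈ D, ∀ c : ℝ, 0 < c → c • f ∈ D) ∧ ∀ f ∈ D, ∀ g ∈ D, f + g ∈ D

/-- A set of desirable gambles on `X^N` is exchangeable if `W_{A_N} + D ⊆ D`. -/
def Exchangeable (X : Type*) (N : ℕ) (D : Set ((Fin N → X) → ℝ)) : Prop :=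
  ∀ f ∈ WA X N, ∀ g ∈ D, f + g ∈ D

/-- The counting map: `countVec x z` is the number of indices `k` with `x k = z`. -/
def countVec {X : Type*} [Fintype X] [DecidableEq X] {n : ℕ} (x : Fin n → X) : X → ℕ :=
  fun z => (Finset.univ.filter fun k => x k = z).card

lemma sum_countVec {X : Type*} [Fintype X] [DecidableEq X] {n : ℕ} (x : Fin n → X) :
    ∑ z, countVec x z = n := by
  classical
  have h := Finset.card_eq_sum_card_fiberwise
    (s := (Finset.univ : Finset (Fin n))) (t := (Finset.univ : Finset X))
    (f := x) (fun a _ => Finset.mem_univ _)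
  simpa [countVec, Finset.card_fin] using h.symm

/-- `N^N_X`: the set of count vectors, i.e. maps `m : X → ℕ` with `∑ m = N`. -/
abbrev CV (X : Type*) [Fintype X] (N : ℕ) := {m : X → ℕ // ∑ z, m z = N}

/-- The counting map `T^N : X^N → N^N_X`. -/
def Tmap {X : Type*} [Fintype X] [DecidableEq X] {N : ℕ} (x : Fin N → X) : CV X N :=
  ⟨countVec x, sum_countVec x⟩

/-- `Hy^N(f)`: the count gamble `m ↦ (1/|[m]|) ∑_{y ∈ [m]} f(y)`, where
`[m]` is the set of sequences with count vector `m`. -/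
noncomputable def hy {X : Type*} [Fintype X] [DecidableEq X] {N : ℕ}
    (f : (Fin N → X) → ℝ) : CV X N → ℝ :=
  fun m => (∑ y ∈ Finset.univ.filter (fun x : Fin N → X => Tmap x = m), f y) /
    ((Finset.univ.filter (fun x : Fin N → X => Tmap x = m)).card : ℝ)

/-- The first `nc` coordinates of a sequence in `X^(nc + nh)`. -/
def firstPart {X : Type*} {nc nh : ℕ} (w : Fin (nc + nh) → X) : Fin nc → X :=
  fun i => w (Fin.castAdd nh i)

/-- The last `nh` coordinates of a sequence in `X^(nc + nh)`. -/
def lastPart {X : Type*} {nc nh : ℕ} (w : Fin (nc + nh) → X) : Fin nh → X :=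
  fun j => w (Fin.natAdd nc j)

/-- `I_{E_m̌} f`: the gamble on `X^(nc+nh)` equal to `f` on the last `nh` coordinates
when the count vector of the first `nc` coordinates is `m̌`, and `0` otherwise. -/
def IEm {X : Type*} [Fintype X] [DecidableEq X] {nc nh : ℕ} (mc : X → ℕ)
    (f : (Fin nh → X) → ℝ) : (Fin (nc + nh) → X) → ℝ :=
  fun w => if countVec (firstPart w) = mc then f (lastPart w) else 0

/-- `|[m]|`: the number of sequences in `X^n` with count vector `m`. -/
def atomCard (X : Type*) [Fintype X] [DecidableEq X] (n : ℕ) (m : X → ℕ) : ℕ :=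
  (Finset.univ.filter fun x : Fin n → X => countVec x = m).card

/-- The likelihood function `L_m̌(m̂) = |[m̌]|·|[m̂]| / |[m̌+m̂]|` associated with
sampling without replacement. -/
noncomputable def Lik (X : Type*) [Fintype X] [DecidableEq X] (nc nh : ℕ)
    (mc mh : X → ℕ) : ℝ :=
  ((atomCard X nc mc : ℝ) * (atomCard X nh mh : ℝ)) / (atomCard X (nc + nh) (mc + mh) : ℝ)

/-- The map `+_m̌` taking a count gamble `g` on `N^n̂_X` to the count gamble on
`N^(ň+n̂)_X` with value `g(M - m̌)` if `M ≥ m̌` componentwise, and `0` otherwise. -/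
noncomputable def plusm {X : Type*} [Fintype X] [DecidableEq X] {nc nh : ℕ}
    (mc : CV X nc) (g : CV X nh → ℝ) : CV X (nc + nh) → ℝ :=
  fun M =>
    if h : ∀ z, mc.1 z ≤ M.1 z then
      g ⟨fun z => M.1 z - mc.1 z, by
        have h1 : ∑ z, (M.1 z - mc.1 z + mc.1 z) = ∑ z, M.1 z :=
          Finset.sum_congr rfl fun z _ => Nat.sub_add_cancel (h z)
        have h2 : ∑ z, (M.1 z - mc.1 z + mc.1 z) =
            ∑ z, (M.1 z - mc.1 z) + ∑ z, mc.1 z := Finset.sum_add_distrib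
        have h3 := M.2
        have h4 := mc.2
        show ∑ z, (M.1 z - mc.1 z) = nh
        omega⟩
    else 0

section Aux

open Finset

lemma countVec_eq_sum {n : ℕ} (x : Fin n → X) (z : X) :
    countVec x z = ∑ k, if x k = z then 1 else 0 := by
  show (Finset.univ.filter fun k => x k = z).card = _
  rw [Finset.card_filter]

lemma countVec_comp_perm {n : ℕ} (x : Fin n → X) (σ : Equiv.Perm (Fin n)) :
    countVec (x ∘ σ) = countVec x := by
  funext z
  simp only [countVec_eq_sum]
  exact Equiv.sum_comp σ (fun k => if x k = z then 1 else 0)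

lemma countVec_cons {n : ℕ} (a : X) (x : Fin n → X) (z : X) :
    countVec (Fin.cons a x) z = (if a = z then 1 else 0) + countVec x z := by
  simp only [countVec_eq_sum, Fin.sum_univ_succ, Fin.cons_zero, Fin.cons_succ]

lemma exists_countVec : ∀ {n : ℕ} (m : X → ℕ), (∑ z, m z = n) → ∃ x : Fin n → X, countVec x = m := by
  intro n
  induction n with
  | zero =>
    intro m hm
    refine ⟨fun i => i.elim0, funext fun z => ?_⟩
    have hz : m z = 0 := by
      have := Finset.sum_eq_zero_iff.mp hm z (Finset.mem_univ z)
      exact this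
    simp [countVec, hz]
  | succ n ih =>
    intro m hm
    have hz0 : ∃ z0, m z0 ≠ 0 := by
      by_contra h
      push_neg at h
      simp [h] at hm
    obtain ⟨z0, hz0⟩ := hz0
    set m' := Function.update m z0 (m z0 - 1) with hm'
    have hsum' : ∑ z, m' z = n := by
      have h1 : ∑ z, m' z = (m z0 - 1) + ∑ z ∈ Finset.univ.erase z0, m z := by
        rw [hm', Finset.sum_update_of_mem (Finset.mem_univ z0)]
        congr 1
        apply Finset.sum_congr
        · simp [Finset.sdiff_singleton_eq_erase]
        · intros; rfl
      have h2 : ∑ z, m z = m z0 + ∑ z ∈ Finset.univ.erase z0, m z :=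
        (Finset.add_sum_erase _ m (Finset.mem_univ z0)).symm
      omega
    obtain ⟨x', hx'⟩ := ih m' hsum'
    refine ⟨Fin.cons z0 x', funext fun z => ?_⟩
    rw [countVec_cons, hx']
    by_cases h : z0 = z
    · subst h; simp [hm', Function.update_self]; omega
    · simp [h, hm', Function.update_of_ne (Ne.symm h)]

lemma Tmap_eq_iff {n : ℕ} (x : Fin n → X) (m : CV X n) :
    Tmap x = m ↔ countVec x = m.1 := by
  constructor
  · intro h; exact congrArg Subtype.val h
  · intro h; exact Subtype.ext h

lemma atom_nonempty {n : ℕ} (m : CV X n) :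
    (Finset.univ.filter (fun x : Fin n → X => Tmap x = m)).Nonempty := by
  obtain ⟨x, hx⟩ := exists_countVec m.1 m.2
  exact ⟨x, Finset.mem_filter.mpr ⟨Finset.mem_univ _, (Tmap_eq_iff x m).mpr hx⟩⟩

lemma atom_card_ne_zero {n : ℕ} (m : CV X n) :
    ((Finset.univ.filter (fun x : Fin n → X => Tmap x = m)).card : ℝ) ≠ 0 := by
  exact_mod_cast Finset.card_ne_zero_of_mem (atom_nonempty m).choose_spec

lemma exists_perm_of_countVec_eq : ∀ {n : ℕ} (x y : Fin n → X),
    countVec x = countVec y → ∃ σ : Equiv.Perm (Fin n), x ∘ σ = y := by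
  intro n
  induction n with
  | zero =>
    intro x y _
    exact ⟨1, funext fun i => i.elim0⟩
  | succ n ih =>
    intro x y h
    obtain ⟨i, hi⟩ : ∃ i, x i = y 0 := by
      have h0 : countVec x (y 0) ≠ 0 := by
        rw [h]
        have : (0 : Fin (n+1)) ∈ Finset.univ.filter (fun k => y k = y 0) :=
          Finset.mem_filter.mpr ⟨Finset.mem_univ _, rfl⟩
        exact Finset.card_ne_zero_of_mem this
      have hpos := Finset.card_pos.mpr (Finset.card_pos.mp (Nat.pos_of_ne_zero h0))
      obtain ⟨i, hi⟩ := Finset.card_pos.mp (Nat.pos_of_ne_zero h0)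
      exact ⟨i, (Finset.mem_filter.mp hi).2⟩
    set τ := Equiv.swap (0 : Fin (n+1)) i with hτ
    have hx0 : (x ∘ τ) 0 = y 0 := by
      simp [hτ, Equiv.swap_apply_left, hi]
    have hcount : countVec (x ∘ τ) = countVec y := by
      rw [countVec_comp_perm, h]
    have htail : countVec (Fin.tail (x ∘ τ)) = countVec (Fin.tail y) := by
      funext z
      have h1 : countVec (Fin.cons ((x ∘ τ) 0) (Fin.tail (x ∘ τ))) z =
          countVec (Fin.cons (y 0) (Fin.tail y)) z := by
        rw [Fin.cons_self_tail, Fin.cons_self_tail]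
        exact congrFun hcount z
      rw [countVec_cons, countVec_cons, hx0] at h1
      omega
    obtain ⟨σ', hσ'⟩ := ih _ _ htail
    refine ⟨(Equiv.Perm.decomposeFin.symm (0, σ')).trans τ, funext fun k => ?_⟩
    induction k using Fin.cases with
    | zero =>
      show x (τ (Equiv.Perm.decomposeFin.symm (0, σ') 0)) = y 0
      rw [Equiv.Perm.decomposeFin_symm_apply_zero]
      exact hx0
    | succ j =>
      show x (τ (Equiv.Perm.decomposeFin.symm (0, σ') j.succ)) = y j.succ
      rw [Equiv.Perm.decomposeFin_symm_apply_succ]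
      simp only [Equiv.swap_self, Equiv.refl_apply]
      have := congrFun hσ' j
      simpa [Fin.tail, Function.comp] using this

lemma exg_eq_hy {N : ℕ} (h : (Fin N → X) → ℝ) (x : Fin N → X) :
    exg N h x = hy h (Tmap x) := by
  classical
  set A := Finset.univ.filter (fun y : Fin N → X => Tmap y = Tmap x) with hA
  set c := (Finset.univ.filter (fun π : Equiv.Perm (Fin N) => x ∘ π = x)).card with hc
  have hcne : c ≠ 0 := by
    apply Finset.card_ne_zero_of_mem (a := (1 : Equiv.Perm (Fin N)))
    refine Finset.mem_filter.mpr ⟨Finset.mem_univ _, ?_⟩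
    funext k; rfl
  have hfiber : ∀ y ∈ A, (Finset.univ.filter (fun π : Equiv.Perm (Fin N) => x ∘ π = y)).card = c := by
    intro y hy
    have hcv : countVec x = countVec y := by
      have := (Finset.mem_filter.mp hy).2
      exact (congrArg Subtype.val this).symm
    obtain ⟨σ, hσ⟩ := exists_perm_of_countVec_eq x y hcv
    rw [hc]
    apply Finset.card_nbij' (i := fun π => σ.symm.trans π) (j := fun π => σ.trans π)
    · intro π hπ
      refine Finset.mem_filter.mpr ⟨Finset.mem_univ _, funext fun k => ?_⟩
      have h1 := congrFun (Finset.mem_filter.mp hπ).2 (σ.symm k)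
      have h2 := congrFun hσ (σ.symm k)
      simp only [Function.comp] at h1 h2 ⊢
      show x (π (σ.symm k)) = x k
      rw [h1, ← h2, Equiv.apply_symm_apply]
    · intro π hπ
      refine Finset.mem_filter.mpr ⟨Finset.mem_univ _, funext fun k => ?_⟩
      have h1 := congrFun (Finset.mem_filter.mp hπ).2 (σ k)
      have h2 := congrFun hσ k
      simp only [Function.comp] at h1 h2 ⊢
      show x (π (σ k)) = y k
      rw [h1, h2]
    · intro π _; ext k; simp
    · intro π _; ext k; simp
  have himg : Finset.univ.image (fun π : Equiv.Perm (Fin N) => x ∘ π) = A := by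
    apply Finset.ext
    intro y
    constructor
    · intro hy
      obtain ⟨π, -, rfl⟩ := Finset.mem_image.mp hy
      exact Finset.mem_filter.mpr ⟨Finset.mem_univ _, Subtype.ext (countVec_comp_perm x π)⟩
    · intro hy
      have hcv : countVec x = countVec y :=
        ((congrArg Subtype.val (Finset.mem_filter.mp hy).2)).symm
      obtain ⟨σ, hσ⟩ := exists_perm_of_countVec_eq x y hcv
      exact Finset.mem_image.mpr ⟨σ, Finset.mem_univ _, hσ⟩
  have hsum : ∀ f : (Fin N → X) → ℝ,
      ∑ π : Equiv.Perm (Fin N), f (x ∘ π) = c * ∑ y ∈ A, f y := by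
    intro f
    rw [Finset.sum_comp f (fun π : Equiv.Perm (Fin N) => x ∘ π), himg]
    rw [Finset.mul_sum]
    apply Finset.sum_congr rfl
    intro y hy
    rw [hfiber y hy]
    simp [nsmul_eq_mul]
  have hfact : (N.factorial : ℝ) = c * A.card := by
    have h1 : ∑ π : Equiv.Perm (Fin N), (1 : ℝ) = c * ∑ y ∈ A, (1 : ℝ) := hsum 1
    simp only [Finset.sum_const, Finset.card_univ, nsmul_eq_mul, mul_one] at h1
    rw [← h1, Fintype.card_perm, Fintype.card_fin]
  have hAcard : (A.card : ℝ) ≠ 0 := atom_card_ne_zero (Tmap x)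
  have hcR : (c : ℝ) ≠ 0 := by exact_mod_cast hcne
  rw [exg, hy, hsum h, hfact, ← hA, mul_div_mul_left _ _ hcR]

lemma sub_mem_WA_of_hy_eq {N : ℕ} (G F : (Fin N → X) → ℝ) (h : hy G = hy F) :
    G - F ∈ WA X N := by
  show exg N (G - F) = 0
  funext x
  have h1 : exg N (G - F) x = exg N G x - exg N F x := by
    simp only [exg, Pi.sub_apply, Finset.sum_sub_distrib, sub_div]
  rw [h1, exg_eq_hy, exg_eq_hy, h, sub_self]
  rfl

lemma hy_comp_Tmap {n : ℕ} (g : CV X n → ℝ) :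
    hy (fun x => g (Tmap x)) = g := by
  funext m
  rw [hy]
  have h1 : ∑ y ∈ Finset.univ.filter (fun x : Fin n → X => Tmap x = m),
      g (Tmap y) = (Finset.univ.filter (fun x : Fin n → X => Tmap x = m)).card * g m := by
    rw [Finset.sum_congr rfl (fun y hy => by rw [(Finset.mem_filter.mp hy).2])]
    simp [nsmul_eq_mul]
  rw [h1, mul_comm, mul_div_assoc, div_self (atom_card_ne_zero m), mul_one]

lemma firstPart_append {nc nh : ℕ} (u : Fin nc → X) (v : Fin nh → X) :
    firstPart (Fin.append u v) = u := by
  funext i; simp [firstPart, Fin.append_left]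

lemma lastPart_append {nc nh : ℕ} (u : Fin nc → X) (v : Fin nh → X) :
    lastPart (Fin.append u v) = v := by
  funext j; simp [lastPart, Fin.append_right]

lemma append_firstPart_lastPart {nc nh : ℕ} (w : Fin (nc + nh) → X) :
    Fin.append (firstPart w) (lastPart w) = w := by
  funext i
  induction i using Fin.addCases with
  | left i => simp [Fin.append_left, firstPart]
  | right j => simp [Fin.append_right, lastPart]

lemma countVec_split {nc nh : ℕ} (w : Fin (nc + nh) → X) (z : X) :
    countVec w z = countVec (firstPart w) z + countVec (lastPart w) z := by
  simp only [countVec_eq_sum]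
  rw [Fin.sum_univ_add (f := fun k => if w k = z then 1 else 0)]
  rfl

lemma atomCard_eq {n : ℕ} (m : CV X n) :
    atomCard X n m.1 = (Finset.univ.filter (fun x : Fin n → X => Tmap x = m)).card := by
  rw [atomCard]
  congr 1
  apply Finset.filter_congr
  intro x _
  simp [Tmap_eq_iff]

lemma hy_IEm {nc nh : ℕ} (mc : CV X nc) (f : (Fin nh → X) → ℝ) :
    hy (IEm mc.1 f) = plusm mc (fun mh => Lik X nc nh mc.1 mh.1 * hy f mh) := by
  classical
  funext M
  by_cases hle : ∀ z, mc.1 z ≤ M.1 z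
  · have hsub : ∑ z, (M.1 z - mc.1 z) = nh := by
      have h3 := M.2
      have h4 := mc.2
      have h1 : ∑ z, (M.1 z - mc.1 z + mc.1 z) = ∑ z, M.1 z :=
        Finset.sum_congr rfl fun z _ => Nat.sub_add_cancel (hle z)
      have h2 : ∑ z, (M.1 z - mc.1 z + mc.1 z) =
          ∑ z, (M.1 z - mc.1 z) + ∑ z, mc.1 z := Finset.sum_add_distrib
      omega
    set mh : CV X nh := ⟨fun z => M.1 z - mc.1 z, hsub⟩ with hmh
    have hMsum : mc.1 + mh.1 = M.1 := by
      funext z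
      exact Nat.add_sub_cancel' (hle z)
    have hRHS : plusm mc (fun mh' => Lik X nc nh mc.1 mh'.1 * hy f mh') M =
        Lik X nc nh mc.1 mh.1 * hy f mh := by
      rw [plusm, dif_pos hle]
    rw [hRHS]
    -- LHS computation
    set Amc := Finset.univ.filter (fun u : Fin nc → X => Tmap u = mc) with hAmc
    set Amh := Finset.univ.filter (fun v : Fin nh → X => Tmap v = mh) with hAmh
    set AM := Finset.univ.filter (fun w : Fin (nc + nh) → X => Tmap w = M) with hAM
    have hnum : ∑ w ∈ AM, IEm mc.1 f w = (Amc.card : ℝ) * ∑ v ∈ Amh, f v := by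
      have step1 : ∑ w ∈ AM, IEm mc.1 f w =
          ∑ w ∈ Finset.univ.filter (fun w : Fin (nc + nh) → X =>
            Tmap w = M ∧ countVec (firstPart w) = mc.1), f (lastPart w) := by
        rw [hAM, Finset.sum_filter, Finset.sum_filter]
        apply Finset.sum_congr rfl
        intro w _
        by_cases h1 : Tmap w = M <;> by_cases h2 : countVec (firstPart w) = mc.1 <;>
          simp [IEm, h1, h2]
      rw [step1]
      have step2 : ∑ w ∈ Finset.univ.filter (fun w : Fin (nc + nh) → X =>
            Tmap w = M ∧ countVec (firstPart w) = mc.1), f (lastPart w) =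
          ∑ p ∈ Amc ×ˢ Amh, f p.2 := by
        apply Finset.sum_nbij' (i := fun w => (firstPart w, lastPart w))
          (j := fun p => Fin.append p.1 p.2)
        · intro w hw
          obtain ⟨-, hw1, hw2⟩ := Finset.mem_filter.mp hw
          have hcv : countVec w = M.1 := (Tmap_eq_iff w M).mp hw1
          refine Finset.mem_product.mpr ⟨?_, ?_⟩
          · exact Finset.mem_filter.mpr ⟨Finset.mem_univ _, (Tmap_eq_iff _ _).mpr hw2⟩
          · refine Finset.mem_filter.mpr ⟨Finset.mem_univ _, (Tmap_eq_iff _ _).mpr ?_⟩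
            funext z
            have := countVec_split w z
            have hMz := congrFun hcv z
            have hmcz := congrFun hw2 z
            show countVec (lastPart w) z = M.1 z - mc.1 z
            omega
        · intro p hp
          obtain ⟨hp1, hp2⟩ := Finset.mem_product.mp hp
          have h1 : countVec p.1 = mc.1 := (Tmap_eq_iff _ _).mp (Finset.mem_filter.mp hp1).2
          have h2 : countVec p.2 = mh.1 := (Tmap_eq_iff _ _).mp (Finset.mem_filter.mp hp2).2
          refine Finset.mem_filter.mpr ⟨Finset.mem_univ _, ?_, ?_⟩
          · refine (Tmap_eq_iff _ _).mpr ?_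
            funext z
            rw [countVec_split, firstPart_append, lastPart_append, h1, h2]
            have := congrFun hMsum z
            exact this
          · rw [firstPart_append, h1]
        · intro w _; exact append_firstPart_lastPart w
        · intro p _; ext <;> simp [firstPart_append, lastPart_append]
        · intro w _; rfl
      rw [step2, Finset.sum_product]
      simp [Finset.sum_const, nsmul_eq_mul, Finset.mul_sum]
    have hLHS : hy (IEm mc.1 f) M = ((Amc.card : ℝ) * ∑ v ∈ Amh, f v) / (AM.card : ℝ) := by
      rw [hy, hnum]
    rw [hLHS, Lik, hy]
    have hac : (atomCard X nc mc.1 : ℝ) = (Amc.card : ℝ) := by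
      rw [atomCard_eq mc]
    have hah : (atomCard X nh mh.1 : ℝ) = (Amh.card : ℝ) := by
      rw [atomCard_eq mh]
    have haM : (atomCard X (nc + nh) (mc.1 + mh.1) : ℝ) = (AM.card : ℝ) := by
      rw [hMsum, atomCard_eq M]
    rw [hac, hah, haM]
    have h1 : (Amh.card : ℝ) ≠ 0 := atom_card_ne_zero mh
    have h2 : (AM.card : ℝ) ≠ 0 := atom_card_ne_zero M
    rw [show (Finset.univ.filter (fun x : Fin nh → X => Tmap x = mh)) = Amh from rfl]
    field_simp
  · have hRHS : plusm mc (fun mh' => Lik X nc nh mc.1 mh'.1 * hy f mh') M = 0 := by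
      rw [plusm, dif_neg hle]
    rw [hRHS, hy]
    have hnum : ∑ w ∈ Finset.univ.filter (fun w : Fin (nc + nh) → X => Tmap w = M),
        IEm mc.1 f w = 0 := by
      apply Finset.sum_eq_zero
      intro w hw
      have hcv : countVec w = M.1 := (Tmap_eq_iff w M).mp (Finset.mem_filter.mp hw).2
      rw [IEm]
      rw [if_neg]
      intro hcontra
      apply hle
      intro z
      have := countVec_split w z
      have hMz := congrFun hcv z
      have hmcz := congrFun hcontra z
      omega
    rw [hnum, zero_div]

end Aux

theorem updating_and_count_representation {nc nh : ℕ} (hnc : 1 ≤ nc) (hnh : 1 ≤ nh)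
    (mc : CV X nc) (D : Set ((Fin (nc + nh) → X) → ℝ))
    (hcoh : Coherent D) (hexch : Exchangeable X (nc + nh) D) :
    hy '' {f : (Fin nh → X) → ℝ | IEm mc.1 f ∈ D} =
      {g : CV X nh → ℝ |
        plusm mc (fun mh => Lik X nc nh mc.1 mh.1 * g mh) ∈ hy '' D} := by
  ext g
  constructor
  · rintro ⟨f, hf, rfl⟩
    exact ⟨IEm mc.1 f, hf, hy_IEm mc f⟩
  · rintro ⟨F, hF, hFeq⟩
    set f : (Fin nh → X) → ℝ := fun y => g (Tmap y) with hfdef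
    have hyf : hy f = g := hy_comp_Tmap g
    have key : hy (IEm mc.1 f) = hy F := by
      rw [hy_IEm mc f, hFeq]
      congr 1
      funext mh
      rw [hyf]
    have hWA : IEm mc.1 f - F ∈ WA X (nc + nh) := sub_mem_WA_of_hy_eq _ _ key
    have hmem : (IEm mc.1 f - F) + F ∈ D := hexch _ hWA F hF
    have : IEm mc.1 f ∈ D := by
      have h1 : (IEm mc.1 f - F) + F = IEm mc.1 f := by ring
      rwa [h1] at hmem
    exact ⟨f, this, hyf⟩
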